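/- For n ≥ 3, the number of functions c : ZMod n → {Empty, Blue, Red} such that for all i, c(i) and c(i+1) are not equal non-Empty colors (i.e., not both Blue and not both Red) equals (1+√2)^n + (1-√2)^n + (-1)^n, as an identity of real numbers (the left side being a natural number cast to ℝ). -/

import Mathlib

inductive Color : Type
  | Empty | Blue | Red
  deriving DecidableEq

instance instFintypeColor : Fintype Color where
  elems := {Color.Empty, Color.Blue, Color.Red}
  complete := by
    intro x
    cases x <;> simp

def Compat (a b : Color) : Prop :=
  ¬(a = Color.Blue ∧ b = Color.Blue) ∧ ¬(a = Color.Red ∧ b = Color.Red)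

instance : ∀ a b, Decidable (Compat a b) := fun a b => by unfold Compat; infer_instance

def M : Matrix Color Color ℕ := fun a b => if Compat a b then 1 else 0

noncomputable def pcount (k : ℕ) (a b : Color) : ℕ :=
  ∑ g : Fin (k + 1) → Color,
    (if g 0 = a then 1 else 0) * (if g (Fin.last k) = b then 1 else 0) *
      ∏ i : Fin k, M (g i.castSucc) (g i.succ)

lemma pcount_zero (a b : Color) : pcount 0 a b = if a = b then 1 else 0 := by
  unfold pcount
  rw [← (Equiv.funUnique (Fin 1) Color).symm.sum_comp]
  simp only [Equiv.funUnique_symm_apply, Finset.univ_unique]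
  revert a b; decide

lemma pcount_succ (k : ℕ) (a b : Color) :
    pcount (k + 1) a b = ∑ c : Color, M a c * pcount k c b := by
  unfold pcount
  rw [← (Fin.consEquiv (fun _ : Fin (k + 2) => Color)).sum_comp, Fintype.sum_prod_type]
  have hlast : (Fin.last (k+1)) = (Fin.last k).succ := by simp [Fin.succ_last]
  simp only [Fin.consEquiv_apply, Fin.prod_univ_succ, hlast, Fin.cons_zero, Fin.cons_succ,
    Fin.castSucc_zero, ← Fin.succ_castSucc]
  conv_lhs => rw [Finset.sum_comm]
  simp only [Finset.mul_sum]
  conv_rhs => rw [Finset.sum_comm]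
  refine Finset.sum_congr rfl fun g _ => ?_
  simp only [ite_mul, zero_mul, one_mul, mul_ite, mul_zero, mul_one,
    Finset.sum_ite_eq, Finset.sum_ite_eq', Finset.mem_univ, if_true]
  by_cases hb : g (Fin.last k) = b <;>
    simp [hb, Finset.sum_ite_eq, Finset.sum_ite_eq']

lemma pcount_eq (k : ℕ) : ∀ a b, pcount k a b = (M ^ k) a b := by
  induction k with
  | zero => intro a b; rw [pcount_zero]; simp [Matrix.one_apply]
  | succ k ih =>
    intro a b
    rw [pcount_succ, pow_succ', Matrix.mul_apply]
    exact Finset.sum_congr rfl fun c _ => by rw [ih]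
def cycleEquiv (n : ℕ) (hn : 1 < n) :
    {c : ZMod n → Color // ∀ i, Compat (c i) (c (i + 1))} ≃
      {g : Fin (n + 1) → Color //
        g 0 = g (Fin.last n) ∧ ∀ i : Fin n, Compat (g i.castSucc) (g i.succ)} := by
  haveI : NeZero n := ⟨by omega⟩
  have hval : ∀ j : ZMod n, j.val < n + 1 := fun j => (ZMod.val_lt j).trans (Nat.lt_succ_self n)
  refine
    { toFun := fun c => ⟨fun i => c.1 ((i.val : ℕ) : ZMod n), ?_, ?_⟩
      invFun := fun g => ⟨fun j => g.1 ⟨j.val, hval j⟩, ?_⟩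
      left_inv := ?_
      right_inv := ?_ }
  · simp [Fin.val_last, ZMod.natCast_self]
  · intro i
    have h := c.2 ((i.val : ℕ) : ZMod n)
    simpa [Fin.coe_castSucc, Fin.val_succ, Nat.cast_add, Nat.cast_one] using h
  · intro j
    haveI : Fact (1 < n) := ⟨hn⟩
    have h := g.2.2 ⟨j.val, ZMod.val_lt j⟩
    simp only [Fin.castSucc_mk, Fin.succ_mk] at h
    have key : (⟨(j + 1).val, hval (j + 1)⟩ : Fin (n + 1)) = ⟨j.val + 1, Nat.succ_lt_succ (ZMod.val_lt j)⟩ ∨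
        ((j + 1).val = 0 ∧ j.val + 1 = n) := by
      have hv : (j + 1).val = (j.val + 1) % n := by
        rw [ZMod.val_add, ZMod.val_one]
      rcases Nat.lt_or_ge (j.val + 1) n with hlt | hge
      · exact Or.inl (Fin.ext (by simp [hv, Nat.mod_eq_of_lt hlt]))
      · have hjn : j.val + 1 = n := by have := ZMod.val_lt j; omega
        exact Or.inr ⟨by simp [hv, hjn], hjn⟩
    show Compat (g.1 ⟨j.val, hval j⟩) (g.1 ⟨(j + 1).val, hval (j + 1)⟩)
    rcases key with hk | ⟨h0, hn'⟩
    · rw [hk]; exact h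
    · have e1 : (⟨(j + 1).val, hval (j + 1)⟩ : Fin (n + 1)) = 0 := Fin.ext (by simp [h0])
      have e2 : (⟨j.val + 1, Nat.succ_lt_succ (ZMod.val_lt j)⟩ : Fin (n + 1)) = Fin.last n :=
        Fin.ext (by simp [hn'])
      rw [e1, g.2.1]
      rw [e2] at h
      exact h
  · intro c
    apply Subtype.ext
    funext j
    show c.1 (((⟨j.val, hval j⟩ : Fin (n + 1)).val : ℕ) : ZMod n) = c.1 j
    exact congrArg c.1 (ZMod.natCast_rightInverse j)
  · intro g
    apply Subtype.ext
    funext i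
    show g.1 ⟨((i.val : ℕ) : ZMod n).val, hval _⟩ = g.1 i
    have hv : ((i.val : ℕ) : ZMod n).val = i.val % n := ZMod.val_natCast (n := n) _
    rcases Nat.lt_or_ge i.val n with hlt | hge
    · have e : (⟨((i.val : ℕ) : ZMod n).val, hval _⟩ : Fin (n + 1)) = i :=
        Fin.ext (by show ((i.val : ℕ) : ZMod n).val = i.val; rw [hv, Nat.mod_eq_of_lt hlt])
      rw [e]
    · have hin : i.val = n := by have := i.isLt; omega
      have e1 : (⟨((i.val : ℕ) : ZMod n).val, hval _⟩ : Fin (n + 1)) = 0 :=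
        Fin.ext (by show ((i.val : ℕ) : ZMod n).val = 0; simp [hv, hin])
      have e2 : i = Fin.last n := Fin.ext (by simp [hin])
      rw [e1, e2, ← g.2.1]

lemma sum_boole_pair (x y : Color) :
    (∑ a : Color, (if x = a then 1 else 0) * (if y = a then 1 else 0) : ℕ) =
      if x = y then 1 else 0 := by revert x y; decide

lemma card_path (n : ℕ) :
    Fintype.card {g : Fin (n + 1) → Color //
        g 0 = g (Fin.last n) ∧ ∀ i : Fin n, Compat (g i.castSucc) (g i.succ)} =
      ∑ a : Color, pcount n a a := by
  rw [Fintype.card_subtype, Finset.card_filter]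
  unfold pcount
  conv_rhs => rw [Finset.sum_comm]
  refine Finset.sum_congr rfl fun g _ => ?_
  have hprod : (∏ i : Fin n, M (g i.castSucc) (g i.succ)) =
      if (∀ i : Fin n, Compat (g i.castSucc) (g i.succ)) then 1 else 0 := by
    simp only [M]
    rw [Fintype.prod_boole]
    congr 1
  rw [hprod]
  by_cases hR : ∀ i : Fin n, Compat (g i.castSucc) (g i.succ)
  · simp [hR, sum_boole_pair]
  · simp [hR]

lemma M_cube : M ^ 3 = M ^ 2 + 3 • M + 1 := by decide

def tr (n : ℕ) : ℕ := ∑ a : Color, (M ^ n) a a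

lemma tr_rec (n : ℕ) : tr (n + 3) = tr (n + 2) + 3 * tr (n + 1) + tr n := by
  have h : M ^ (n + 3) = M ^ (n + 2) + 3 • M ^ (n + 1) + M ^ n := by
    calc M ^ (n + 3) = M ^ n * M ^ 3 := by rw [← pow_add]
    _ = M ^ n * (M ^ 2 + 3 • M + 1) := by rw [M_cube]
    _ = M ^ (n + 2) + 3 • M ^ (n + 1) + M ^ n := by
        rw [mul_add, mul_add, mul_smul_comm, mul_one, ← pow_add, ← pow_succ]
  unfold tr
  rw [h]
  simp only [Matrix.add_apply, Matrix.smul_apply, smul_eq_mul, Finset.sum_add_distrib,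
    Finset.mul_sum]

lemma tr_zero : tr 0 = 3 := by decide
lemma tr_one : tr 1 = 1 := by decide
lemma tr_two : tr 2 = 7 := by decide

lemma aux_pow (x : ℝ) (hx : x ^ 2 = 2 * x + 1) (n : ℕ) :
    x ^ (n + 3) = x ^ (n + 2) + 3 * x ^ (n + 1) + x ^ n := by
  have h3 : x ^ 3 = x ^ 2 + 3 * x + 1 := by linear_combination (x + 1) * hx
  calc x ^ (n + 3) = x ^ n * x ^ 3 := by ring
  _ = x ^ n * (x ^ 2 + 3 * x + 1) := by rw [h3]
  _ = x ^ (n + 2) + 3 * x ^ (n + 1) + x ^ n := by ring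

lemma sqrt2_sq : Real.sqrt 2 ^ 2 = 2 := Real.sq_sqrt (by norm_num)

lemma tr_real (n : ℕ) :
    (tr n : ℝ) = (1 + Real.sqrt 2) ^ n + (1 - Real.sqrt 2) ^ n + (-1) ^ n := by
  have h1 : (1 + Real.sqrt 2) ^ 2 = 2 * (1 + Real.sqrt 2) + 1 := by
    linear_combination sqrt2_sq
  have h2 : (1 - Real.sqrt 2) ^ 2 = 2 * (1 - Real.sqrt 2) + 1 := by
    linear_combination sqrt2_sq
  induction n using Nat.strong_induction_on with
  | _ n ih =>
    match n with
    | 0 => simp [tr_zero]; norm_num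
    | 1 => rw [tr_one]; push_cast; ring
    | 2 => rw [tr_two]; push_cast; linear_combination (-2 : ℝ) * sqrt2_sq
    | (m + 3) =>
      rw [tr_rec]
      push_cast
      rw [ih m (by omega), ih (m + 1) (by omega), ih (m + 2) (by omega)]
      rw [aux_pow _ h1, aux_pow _ h2]
      ring

theorem colCycle_count (n : ℕ) (hn : 3 ≤ n) :
    (Nat.card {c : ZMod n → Color //
        ∀ i : ZMod n,
          ¬(c i = Color.Blue ∧ c (i + 1) = Color.Blue) ∧
          ¬(c i = Color.Red ∧ c (i + 1) = Color.Red)} : ℝ) =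
      (1 + Real.sqrt 2) ^ n + (1 - Real.sqrt 2) ^ n + (-1) ^ n := by
  haveI : NeZero n := ⟨by omega⟩
  have hcard : Nat.card {c : ZMod n → Color // ∀ i, Compat (c i) (c (i + 1))} = tr n := by
    rw [Nat.card_eq_fintype_card, Fintype.card_congr (cycleEquiv n (by omega)), card_path]
    unfold tr
    exact Finset.sum_congr rfl fun a _ => pcount_eq n a a
  rw [show {c : ZMod n → Color //
        ∀ i : ZMod n,
          ¬(c i = Color.Blue ∧ c (i + 1) = Color.Blue) ∧
          ¬(c i = Color.Red ∧ c (i + 1) = Color.Red)} =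
      {c : ZMod n → Color // ∀ i, Compat (c i) (c (i + 1))} from rfl]
  rw [hcard, tr_real]
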